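/- Suppose ψ is a unit vector, {a_i}, {f_j} are orthonormal bases of a d-dimensional complex Hilbert space, no a_i is parallel to any f_j, and all KD quasiprobabilities q_{ij} = ⟨f_j|a_i⟩⟨a_i|ψ⟩⟨ψ|f_j⟩ are nonnegative reals. Let N_A = #{i : ⟨a_i|ψ⟩ ≠ 0} and N_F = #{j : ⟨f_j|ψ⟩ ≠ 0}. Then 2N_A + 2N_F ≤ 3d. -/

import Mathlib

open scoped InnerProductSpace ComplexOrder

local notation "⟪" x ", " y "⟫" => @inner ℂ _ _ x y

namespace KDaux

open Complex

lemma convex_combo_eq {ι : Type*} (S : Finset ι) (w : ι → ℝ) (z : ι → ℂ) (Z : ℂ)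
    (hw : ∀ k ∈ S, 0 ≤ w k) (hw1 : ∑ k ∈ S, w k = 1)
    (heq : ∑ k ∈ S, (w k : ℂ) * z k = Z)
    (hle : ∀ k ∈ S, w k ≠ 0 → ‖z k‖ ≤ ‖Z‖) :
    ∀ k ∈ S, w k ≠ 0 → z k = Z := by
  have key : ∀ k ∈ S, w k ≠ 0 → ((starRingEnd ℂ) Z * z k).re = Complex.normSq Z := by
    have h1 : ∑ k ∈ S, w k * ((starRingEnd ℂ) Z * z k).re = Complex.normSq Z := by
      have : (starRingEnd ℂ) Z * Z = (Complex.normSq Z : ℂ) := by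
        rw [mul_comm, Complex.mul_conj]
      calc ∑ k ∈ S, w k * ((starRingEnd ℂ) Z * z k).re
          = (∑ k ∈ S, (w k : ℂ) * ((starRingEnd ℂ) Z * z k)).re := by
            rw [Complex.re_sum]
            exact Finset.sum_congr rfl fun k _ => (Complex.re_ofReal_mul _ _).symm
        _ = ((starRingEnd ℂ) Z * ∑ k ∈ S, (w k : ℂ) * z k).re := by
            rw [Finset.mul_sum]; congr 1; exact Finset.sum_congr rfl fun k _ => by ring
        _ = Complex.normSq Z := by rw [heq, this, Complex.ofReal_re]
    have hpt : ∀ k ∈ S, w k * ((starRingEnd ℂ) Z * z k).re ≤ w k * Complex.normSq Z := by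
      intro k hk
      rcases eq_or_ne (w k) 0 with h | h
      · simp [h]
      · apply mul_le_mul_of_nonneg_left _ (hw k hk)
        calc ((starRingEnd ℂ) Z * z k).re ≤ ‖(starRingEnd ℂ) Z * z k‖ :=
              Complex.re_le_norm _
          _ = ‖Z‖ * ‖z k‖ := by
              rw [norm_mul, Complex.norm_conj]
          _ ≤ ‖Z‖ * ‖Z‖ :=
              mul_le_mul_of_nonneg_left (hle k hk h) (norm_nonneg _)
          _ = Complex.normSq Z := by rw [← Complex.sq_norm, sq]
    have h2 : ∑ k ∈ S, w k * Complex.normSq Z = Complex.normSq Z := by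
      rw [← Finset.sum_mul, hw1, one_mul]
    have heqsum : ∑ k ∈ S, w k * ((starRingEnd ℂ) Z * z k).re
        = ∑ k ∈ S, w k * Complex.normSq Z := by rw [h1, h2]
    intro k hk hkne
    have := (Finset.sum_eq_sum_iff_of_le hpt).mp heqsum k hk
    exact mul_left_cancel₀ hkne this
  intro k hk hkne
  have hre := key k hk hkne
  have habs : Complex.normSq (z k) ≤ Complex.normSq Z := by
    have := hle k hk hkne
    rw [← Complex.sq_norm, ← Complex.sq_norm]
    exact pow_le_pow_left₀ (norm_nonneg _) this 2
  have hre' : Z.re * (z k).re + Z.im * (z k).im = Z.re^2 + Z.im^2 := by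
    have : ((starRingEnd ℂ) Z * z k).re = Z.re * (z k).re + Z.im * (z k).im := by
      rw [Complex.mul_re, Complex.conj_re, Complex.conj_im]; ring
    rw [this] at hre
    rw [hre, Complex.normSq_apply]; ring
  have habs' : (z k).re^2 + (z k).im^2 ≤ Z.re^2 + Z.im^2 := by
    simpa [Complex.normSq_apply, sq] using habs
  apply Complex.ext
  · nlinarith [sq_nonneg ((z k).re - Z.re), sq_nonneg ((z k).im - Z.im)]
  · nlinarith [sq_nonneg ((z k).re - Z.re), sq_nonneg ((z k).im - Z.im)]

end KDaux

namespace KDaux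

variable {d : ℕ}

def Adj (t : Fin d → Fin d → ℝ) (A F : Finset (Fin d)) :
    (Fin d ⊕ Fin d) → (Fin d ⊕ Fin d) → Prop
  | .inl i, .inr j => i ∈ A ∧ j ∈ F ∧ t i j ≠ 0
  | .inr j, .inl i => i ∈ A ∧ j ∈ F ∧ t i j ≠ 0
  | _, _ => False

def Reach (t : Fin d → Fin d → ℝ) (A F : Finset (Fin d)) :
    (Fin d ⊕ Fin d) → (Fin d ⊕ Fin d) → Prop :=
  Relation.ReflTransGen (Adj t A F)

lemma adj_symm (t : Fin d → Fin d → ℝ) (A F : Finset (Fin d)) :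
    Symmetric (Adj t A F) := by
  rintro (i | i) (j | j) h <;> simp only [Adj] at h ⊢ <;> tauto

lemma reach_symm (t : Fin d → Fin d → ℝ) (A F : Finset (Fin d)) {x y : Fin d ⊕ Fin d}
    (h : Reach t A F x y) : Reach t A F y x :=
  (@Relation.ReflTransGen.symmetric _ _ ⟨fun _ _ h => adj_symm t A F h⟩).symm _ _ h

lemma reach_trans (t : Fin d → Fin d → ℝ) (A F : Finset (Fin d)) {x y z : Fin d ⊕ Fin d}
    (h : Reach t A F x y) (h' : Reach t A F y z) : Reach t A F x z :=
  Relation.ReflTransGen.trans h h'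

end KDaux

section PV
open KDaux
variable {d : ℕ}

set_option maxHeartbeats 1000000 in
lemma perron_vanish (t : Fin d → Fin d → ℝ) (A F : Finset (Fin d))
    (r s : Fin d → ℝ) (hrpos : ∀ i ∈ A, 0 < r i) (hspos : ∀ j ∈ F, 0 < s j)
    (ht0 : ∀ i ∈ A, ∀ j ∈ F, 0 ≤ t i j)
    (hr : ∀ i ∈ A, r i = ∑ j ∈ F, t i j * s j)
    (hs : ∀ j ∈ F, s j = ∑ i ∈ A, t i j * r i)
    (α β : Fin d → ℂ)
    (hα : ∀ i ∈ A, α i = ∑ j ∈ F, (t i j : ℂ) * β j)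
    (hβ : ∀ j ∈ F, β j = ∑ i ∈ A, (t i j : ℂ) * α i)
    (hβ0 : ∀ j ∈ F, (∀ j' ∈ F, Reach t A F (.inr j) (.inr j') → j ≤ j') → β j = 0) :
    ∀ j ∈ F, β j = 0 := by
  classical
  intro j0 hj0
  set φ : Fin d ⊕ Fin d → ℂ :=
    Sum.elim (fun i => α i / (r i : ℂ)) (fun j => β j / (s j : ℂ)) with hφ
  set compV : Finset (Fin d ⊕ Fin d) :=
    ((A.filter fun i => Reach t A F (.inr j0) (.inl i)).image Sum.inl) ∪
    ((F.filter fun j => Reach t A F (.inr j0) (.inr j)).image Sum.inr) with hcompV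
  have hmemA : ∀ i : Fin d, Sum.inl i ∈ compV ↔ (i ∈ A ∧ Reach t A F (.inr j0) (.inl i)) := by
    intro i; simp [hcompV, Finset.mem_union, Finset.mem_image, Finset.mem_filter]
  have hmemF : ∀ j : Fin d, Sum.inr j ∈ compV ↔ (j ∈ F ∧ Reach t A F (.inr j0) (.inr j)) := by
    intro j; simp [hcompV, Finset.mem_union, Finset.mem_image, Finset.mem_filter]
  have hne : (Sum.inr j0 : Fin d ⊕ Fin d) ∈ compV := by
    rw [hmemF]; exact ⟨hj0, Relation.ReflTransGen.refl⟩
  have hreachV : ∀ v ∈ compV, Reach t A F (.inr j0) v := by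
    rintro (i | j) hv
    · exact ((hmemA i).mp hv).2
    · exact ((hmemF j).mp hv).2
  -- key step
  have step : ∀ v ∈ compV, (∀ v' ∈ compV, ‖φ v'‖ ≤ ‖φ v‖) →
      ∀ y, Adj t A F v y → y ∈ compV ∧ φ y = φ v := by
    rintro (i | j) hv hmax (k | l) hadj
    · exact absurd hadj (by simp [Adj])
    · -- v = inl i, y = inr l
      obtain ⟨hiA, hlF, htne⟩ := hadj
      have hyV : Sum.inr l ∈ compV := by
        rw [hmemF]
        exact ⟨hlF, Relation.ReflTransGen.tail (hreachV _ hv) ⟨hiA, hlF, htne⟩⟩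
      refine ⟨hyV, ?_⟩
      have hri : (0:ℝ) < r i := hrpos i hiA
      have key := convex_combo_eq F (fun j => t i j * s j / r i) (fun j => φ (Sum.inr j))
        (φ (Sum.inl i)) ?_ ?_ ?_ ?_
      · refine key l hlF ?_
        have := hspos l hlF
        positivity
      · intro j hj
        have h1 := hspos j hj
        have h2 := ht0 i hiA j hj
        positivity
      · rw [← Finset.sum_div, ← hr i hiA, div_self hri.ne']
      · have hterm : ∀ j ∈ F, ((t i j * s j / r i : ℝ) : ℂ) * φ (Sum.inr j)
            = (t i j : ℂ) * β j / (r i : ℂ) := by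
          intro j hj
          have hsj : ((s j : ℝ) : ℂ) ≠ 0 := by
            simpa using (hspos j hj).ne'
          have hric : ((r i : ℝ) : ℂ) ≠ 0 := by simpa using hri.ne'
          rw [hφ]
          simp only [Sum.elim_inr]
          push_cast
          field_simp
        rw [Finset.sum_congr rfl hterm, ← Finset.sum_div, ← hα i hiA, hφ, Sum.elim_inl]
      · intro j hj hwne
        have htij : t i j ≠ 0 := by
          intro h0; apply hwne; simp [h0]
        have : Sum.inr j ∈ compV := by
          rw [hmemF]
          exact ⟨hj, Relation.ReflTransGen.tail (hreachV _ hv) ⟨hiA, hj, htij⟩⟩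
        exact hmax _ this
    · -- v = inr j, y = inl k
      obtain ⟨hkA, hjF, htne⟩ := hadj
      have hyV : Sum.inl k ∈ compV := by
        rw [hmemA]
        exact ⟨hkA, Relation.ReflTransGen.tail (hreachV _ hv) ⟨hkA, hjF, htne⟩⟩
      refine ⟨hyV, ?_⟩
      have hsj : (0:ℝ) < s j := hspos j hjF
      have key := convex_combo_eq A (fun i => t i j * r i / s j) (fun i => φ (Sum.inl i))
        (φ (Sum.inr j)) ?_ ?_ ?_ ?_
      · refine key k hkA ?_
        have := hrpos k hkA
        positivity
      · intro i hi
        have h1 := hrpos i hi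
        have h2 := ht0 i hi j hjF
        positivity
      · rw [← Finset.sum_div, ← hs j hjF, div_self hsj.ne']
      · have hterm : ∀ i ∈ A, ((t i j * r i / s j : ℝ) : ℂ) * φ (Sum.inl i)
            = (t i j : ℂ) * α i / (s j : ℂ) := by
          intro i hi
          have hric : ((r i : ℝ) : ℂ) ≠ 0 := by
            simpa using (hrpos i hi).ne'
          have hsjc : ((s j : ℝ) : ℂ) ≠ 0 := by simpa using hsj.ne'
          rw [hφ]
          simp only [Sum.elim_inl]
          push_cast
          field_simp
        rw [Finset.sum_congr rfl hterm, ← Finset.sum_div, ← hβ j hjF, hφ, Sum.elim_inr]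
      · intro i hi hwne
        have htij : t i j ≠ 0 := by
          intro h0; apply hwne; simp [h0]
        have : Sum.inl i ∈ compV := by
          rw [hmemA]
          exact ⟨hi, Relation.ReflTransGen.tail (hreachV _ hv) ⟨hi, hjF, htij⟩⟩
        exact hmax _ this
    · exact absurd hadj (by simp [Adj])
  -- maximum
  obtain ⟨v0, hv0, hmax⟩ := compV.exists_max_image (fun v => ‖φ v‖) ⟨_, hne⟩
  have prop : ∀ y, Relation.ReflTransGen (Adj t A F) v0 y → y ∈ compV ∧ φ y = φ v0 := by
    intro y hy
    induction hy with
    | refl => exact ⟨hv0, rfl⟩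
    | @tail b c hab hbc ih =>
      obtain ⟨hbV, hbφ⟩ := ih
      have hbmax : ∀ v' ∈ compV, ‖φ v'‖ ≤ ‖φ b‖ := by
        intro v' hv'
        rw [hbφ]; exact hmax v' hv'
      obtain ⟨hcV, hcφ⟩ := step _ hbV hbmax _ hbc
      exact ⟨hcV, by rw [hcφ, hbφ]⟩
  have hall : ∀ v ∈ compV, φ v = φ v0 := by
    intro v hv
    have h1 : Reach t A F v0 (.inr j0) := reach_symm t A F (hreachV v0 hv0)
    exact (prop v (reach_trans t A F h1 (hreachV v hv))).2
  -- minimal element of the component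
  set Fc : Finset (Fin d) := F.filter (fun j => Reach t A F (.inr j0) (.inr j)) with hFc
  have hj0Fc : j0 ∈ Fc := by
    rw [hFc, Finset.mem_filter]
    exact ⟨hj0, Relation.ReflTransGen.refl⟩
  have hFcne : Fc.Nonempty := ⟨j0, hj0Fc⟩
  set m := Fc.min' hFcne with hm
  have hmFc : m ∈ Fc := Fc.min'_mem hFcne
  have hmF : m ∈ F := (Finset.mem_filter.mp hmFc).1
  have hmreach : Reach t A F (.inr j0) (.inr m) := (Finset.mem_filter.mp hmFc).2
  have hβm : β m = 0 := by
    apply hβ0 m hmF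
    intro j' hj' hreach'
    apply Fc.min'_le
    rw [hFc, Finset.mem_filter]
    exact ⟨hj', reach_trans t A F (reach_symm t A F (reach_symm t A F hmreach)) hreach'⟩
  have hμ : φ v0 = 0 := by
    have hmV : Sum.inr m ∈ compV := by rw [hmemF]; exact ⟨hmF, hmreach⟩
    have h := hall _ hmV
    rw [← h, hφ]
    simp [hβm]
  have hfin := hall _ hne
  rw [hμ, hφ] at hfin
  simp only [Sum.elim_inr] at hfin
  have hsj0 : ((s j0 : ℝ) : ℂ) ≠ 0 := by simpa using (hspos j0 hj0).ne'
  exact (div_eq_zero_iff.mp hfin).resolve_right hsj0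

end PV

section CNT
open KDaux
variable {d : ℕ}

set_option maxHeartbeats 1000000 in
lemma count_reps (t : Fin d → Fin d → ℝ) (A F : Finset (Fin d))
    (r s : Fin d → ℝ) (hrpos : ∀ i ∈ A, 0 < r i) (hspos : ∀ j ∈ F, 0 < s j)
    (ht0 : ∀ i ∈ A, ∀ j ∈ F, 0 ≤ t i j) (ht1 : ∀ i ∈ A, ∀ j ∈ F, t i j < 1)
    (hr : ∀ i ∈ A, r i = ∑ j ∈ F, t i j * s j)
    (hs : ∀ j ∈ F, s j = ∑ i ∈ A, t i j * r i)
    (R : Finset (Fin d))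
    (hRmem : ∀ j, j ∈ R ↔ j ∈ F ∧ ∀ j' ∈ F, Reach t A F (.inr j) (.inr j') → j ≤ j') :
    3 * R.card ≤ A.card + F.card := by
  classical
  set cF : Fin d → Finset (Fin d) :=
    fun j => F.filter (fun j' => Reach t A F (.inr j) (.inr j')) with hcF
  set cA : Fin d → Finset (Fin d) :=
    fun j => A.filter (fun i => Reach t A F (.inr j) (.inl i)) with hcA
  -- neighbor existence
  have hnbrF : ∀ j ∈ F, ∃ i ∈ A, t i j ≠ 0 := by
    intro j hj
    by_contra hcon
    push_neg at hcon
    have : s j = 0 := by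
      rw [hs j hj]
      apply Finset.sum_eq_zero
      intro i hi
      rw [hcon i hi, zero_mul]
    exact absurd this (hspos j hj).ne'
  -- disjointness of classes
  have hdisj : ∀ x ∈ R, ∀ y ∈ R, x ≠ y →
      (∀ v : Fin d ⊕ Fin d, Reach t A F (.inr x) v → Reach t A F (.inr y) v → False) := by
    intro x hx y hy hxy v h1 h2
    have hxF := ((hRmem x).mp hx).1
    have hyF := ((hRmem y).mp hy).1
    have hxy' : Reach t A F (.inr x) (.inr y) :=
      reach_trans t A F h1 (reach_symm t A F h2)
    have h3 := ((hRmem x).mp hx).2 y hyF hxy'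
    have h4 := ((hRmem y).mp hy).2 x hxF (reach_symm t A F hxy')
    exact hxy (le_antisymm h3 h4)
  have hdisjF : ∀ x ∈ R, ∀ y ∈ R, x ≠ y → Disjoint (cF x) (cF y) := by
    intro x hx y hy hxy
    rw [Finset.disjoint_left]
    intro j hjx hjy
    exact hdisj x hx y hy hxy (.inr j) (Finset.mem_filter.mp hjx).2 (Finset.mem_filter.mp hjy).2
  have hdisjA : ∀ x ∈ R, ∀ y ∈ R, x ≠ y → Disjoint (cA x) (cA y) := by
    intro x hx y hy hxy
    rw [Finset.disjoint_left]
    intro i hix hiy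
    exact hdisj x hx y hy hxy (.inl i) (Finset.mem_filter.mp hix).2 (Finset.mem_filter.mp hiy).2
  -- per-class lower bound
  have hclass : ∀ x ∈ R, 3 ≤ (cA x).card + (cF x).card := by
    intro x hx
    have hxF : x ∈ F := ((hRmem x).mp hx).1
    have hxcF : x ∈ cF x := by
      rw [hcF]; exact Finset.mem_filter.mpr ⟨hxF, Relation.ReflTransGen.refl⟩
    obtain ⟨i, hiA, hti⟩ := hnbrF x hxF
    have hicA : i ∈ cA x := by
      rw [hcA]
      exact Finset.mem_filter.mpr ⟨hiA, Relation.ReflTransGen.single ⟨hiA, hxF, hti⟩⟩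
    have h1 : 1 ≤ (cF x).card := Finset.card_pos.mpr ⟨x, hxcF⟩
    have h2 : 1 ≤ (cA x).card := Finset.card_pos.mpr ⟨i, hicA⟩
    rcases Nat.lt_or_ge ((cA x).card + (cF x).card) 3 with hlt | hge
    swap
    · exact hge
    exfalso
    have hcFx : cF x = {x} := by
      have : (cF x).card = 1 := by omega
      obtain ⟨w, hw⟩ := Finset.card_eq_one.mp this
      rw [hw] at hxcF ⊢
      rw [Finset.mem_singleton.mp hxcF]
    have hcAx : cA x = {i} := by
      have : (cA x).card = 1 := by omega
      obtain ⟨w, hw⟩ := Finset.card_eq_one.mp this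
      rw [hw] at hicA ⊢
      rw [Finset.mem_singleton.mp hicA]
    have hreach_i : Reach t A F (.inr x) (.inl i) := (Finset.mem_filter.mp hicA).2
    have hri : r i = t i x * s x := by
      rw [hr i hiA]
      apply Finset.sum_eq_single_of_mem x hxF
      intro j hj hjx
      rcases eq_or_ne (t i j) 0 with h0 | h0
      · rw [h0, zero_mul]
      · exfalso
        have : Reach t A F (.inr x) (.inr j) :=
          Relation.ReflTransGen.tail hreach_i ⟨hiA, hj, h0⟩
        have : j ∈ cF x := Finset.mem_filter.mpr ⟨hj, this⟩
        rw [hcFx, Finset.mem_singleton] at this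
        exact hjx this
    have hsx : s x = t i x * r i := by
      rw [hs x hxF]
      apply Finset.sum_eq_single_of_mem i hiA
      intro k hk hki
      rcases eq_or_ne (t k x) 0 with h0 | h0
      · rw [h0, zero_mul]
      · exfalso
        have : Reach t A F (.inr x) (.inl k) :=
          Relation.ReflTransGen.single ⟨hk, hxF, h0⟩
        have : k ∈ cA x := Finset.mem_filter.mpr ⟨hk, this⟩
        rw [hcAx, Finset.mem_singleton] at this
        exact hki this
    have hrpos_i : 0 < r i := hrpos i hiA
    have ht0' := ht0 i hiA x hxF
    have ht1' := ht1 i hiA x hxF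
    have heq : r i = t i x ^ 2 * r i := by
      rw [hsx] at hri; linear_combination hri
    have hlt1 : t i x ^ 2 < 1 := by nlinarith
    nlinarith [mul_pos (sub_pos.mpr hlt1) hrpos_i]
  -- assemble
  have hcardF : ∑ x ∈ R, (cF x).card ≤ F.card := by
    rw [← Finset.card_biUnion hdisjF]
    apply Finset.card_le_card
    intro j hj
    obtain ⟨x, _, hjx⟩ := Finset.mem_biUnion.mp hj
    exact (Finset.mem_filter.mp hjx).1
  have hcardA : ∑ x ∈ R, (cA x).card ≤ A.card := by
    rw [← Finset.card_biUnion hdisjA]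
    apply Finset.card_le_card
    intro i hi
    obtain ⟨x, _, hix⟩ := Finset.mem_biUnion.mp hi
    exact (Finset.mem_filter.mp hix).1
  calc 3 * R.card = ∑ _x ∈ R, 3 := by rw [Finset.sum_const, smul_eq_mul, mul_comm]
    _ ≤ ∑ x ∈ R, ((cA x).card + (cF x).card) := Finset.sum_le_sum hclass
    _ = (∑ x ∈ R, (cA x).card) + ∑ x ∈ R, (cF x).card := Finset.sum_add_distrib
    _ ≤ A.card + F.card := Nat.add_le_add hcardA hcardF

end CNT

section MAIN
open KDaux

lemma phase_unit {z : ℂ} (hz : z ≠ 0) : (z / ‖z‖) * (starRingEnd ℂ) (z / ‖z‖) = 1 := by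
  have h : (‖z‖ : ℂ) ≠ 0 := by simpa using norm_ne_zero_iff.mpr hz
  rw [Complex.mul_conj]
  norm_cast
  rw [Complex.normSq_div, Complex.normSq_eq_norm_sq, Complex.normSq_eq_norm_sq]
  simp [Complex.norm_real, div_self, norm_ne_zero_iff.mpr hz]

lemma phase_decomp {z : ℂ} (hz : z ≠ 0) : (z / ‖z‖) * (‖z‖ : ℂ) = z := by
  have h : (‖z‖ : ℂ) ≠ 0 := by simpa using norm_ne_zero_iff.mpr hz
  rw [div_mul_cancel₀ _ h]

lemma phase_conj_mul {z : ℂ} (hz : z ≠ 0) : (starRingEnd ℂ) (z / ‖z‖) * z = (‖z‖ : ℂ) := by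
  have h : (‖z‖ : ℂ) ≠ 0 := by simpa using norm_ne_zero_iff.mpr hz
  rw [map_div₀, Complex.conj_ofReal, div_mul_eq_mul_div, mul_comm, Complex.mul_conj]
  have h2 : (Complex.normSq z : ℂ) = (‖z‖ : ℂ) * ‖z‖ := by
    rw [Complex.normSq_eq_norm_sq]
    push_cast
    ring
  rw [h2, mul_div_assoc, div_self h, mul_one]

lemma phase_abs {z : ℂ} (hz : z ≠ 0) : ‖z / ‖z‖‖ = 1 := by
  rw [norm_div]
  simp [Complex.norm_real, abs_of_nonneg (norm_nonneg z),
    div_self (norm_ne_zero_iff.mpr hz)]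

end MAIN

set_option maxHeartbeats 2000000 in
theorem stmt7 (d : ℕ)
    (a f : OrthonormalBasis (Fin d) ℂ (EuclideanSpace ℂ (Fin d)))
    (ψ : EuclideanSpace ℂ (Fin d)) (hψ : ‖ψ‖ = 1)
    (hpar : ∀ i j, ‖⟪a i, f j⟫‖ < 1)
    (hclassical : ∀ i j, 0 ≤ ⟪f j, a i⟫ * ⟪a i, ψ⟫ * ⟪ψ, f j⟫) :
    2 * (Finset.univ.filter fun i => ⟪a i, ψ⟫ ≠ 0).card +
      2 * (Finset.univ.filter fun j => ⟪f j, ψ⟫ ≠ 0).card ≤ 3 * d := by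
  classical
  set A := Finset.univ.filter fun i => ⟪a i, ψ⟫ ≠ 0 with hA
  set F := Finset.univ.filter fun j => ⟪f j, ψ⟫ ≠ 0 with hF
  set cA : Fin d → ℂ := fun i => ⟪a i, ψ⟫ with hcA
  set cF : Fin d → ℂ := fun j => ⟪f j, ψ⟫ with hcF
  set u : Fin d → Fin d → ℂ := fun i j => ⟪f j, a i⟫ with hu
  have hAmem : ∀ i, i ∈ A ↔ cA i ≠ 0 := by intro i; rw [hA]; simp [hcA]
  have hFmem : ∀ j, j ∈ F ↔ cF j ≠ 0 := by intro j; rw [hF]; simp [hcF]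
  have hexpF : ∀ j, cF j = ∑ i, u i j * cA i := by
    intro j
    simp only [hcF, hu, hcA]
    conv_lhs => rw [← OrthonormalBasis.sum_repr' a ψ]
    rw [inner_sum]
    exact Finset.sum_congr rfl fun i _ => by rw [inner_smul_right, mul_comm]
  have hexpA : ∀ i, cA i = ∑ j, (starRingEnd ℂ) (u i j) * cF j := by
    intro i
    simp only [hcA, hu, hcF]
    conv_lhs => rw [← OrthonormalBasis.sum_repr' f ψ]
    rw [inner_sum]
    exact Finset.sum_congr rfl fun j _ => by
      rw [inner_smul_right, mul_comm, ← inner_conj_symm (a i) (f j)]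
  set e : Fin d → ℂ := fun i => cA i / ‖cA i‖ with he
  set g : Fin d → ℂ := fun j => cF j / ‖cF j‖ with hg
  set r : Fin d → ℝ := fun i => ‖cA i‖ with hrdef
  set s : Fin d → ℝ := fun j => ‖cF j‖ with hsdef
  set t : Fin d → Fin d → ℝ := fun i j => (u i j * e i * (starRingEnd ℂ) (g j)).re with ht
  have hrpos : ∀ i ∈ A, 0 < r i := by
    intro i hi; simp only [hrdef]; exact norm_pos_iff.mpr ((hAmem i).mp hi)
  have hspos : ∀ j ∈ F, 0 < s j := by
    intro j hj; simp only [hsdef]; exact norm_pos_iff.mpr ((hFmem j).mp hj)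
  have hcAe : ∀ i ∈ A, cA i = e i * (r i : ℝ) := by
    intro i hi
    simp only [he, hrdef]
    exact (phase_decomp ((hAmem i).mp hi)).symm
  have hcFg : ∀ j ∈ F, cF j = g j * (s j : ℝ) := by
    intro j hj
    simp only [hg, hsdef]
    exact (phase_decomp ((hFmem j).mp hj)).symm
  have hTboth : ∀ i ∈ A, ∀ j ∈ F,
      u i j * e i * (starRingEnd ℂ) (g j) = ((t i j : ℝ) : ℂ) ∧ 0 ≤ t i j := by
    intro i hi j hj
    have hq := hclassical i j
    have hconj : ⟪ψ, f j⟫ = (starRingEnd ℂ) (cF j) := by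
      simp only [hcF]; exact (inner_conj_symm ψ (f j)).symm
    have hq' : 0 ≤ (u i j * e i * (starRingEnd ℂ) (g j)) * ((r i * s j : ℝ) : ℂ) := by
      have hfact : ⟪f j, a i⟫ * ⟪a i, ψ⟫ * ⟪ψ, f j⟫
          = (u i j * e i * (starRingEnd ℂ) (g j)) * ((r i * s j : ℝ) : ℂ) := by
        rw [hconj]
        have h1 : ⟪f j, a i⟫ = u i j := by simp only [hu]
        have h2 : ⟪a i, ψ⟫ = cA i := by simp only [hcA]
        rw [h1, h2, hcAe i hi, hcFg j hj, map_mul, Complex.conj_ofReal]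
        push_cast
        ring
      rw [← hfact]
      exact hq
    have hc : (0:ℝ) < r i * s j := mul_pos (hrpos i hi) (hspos j hj)
    rw [Complex.nonneg_iff] at hq'
    obtain ⟨hre, him⟩ := hq'
    set X := u i j * e i * (starRingEnd ℂ) (g j) with hX
    have hre' : (X * ((r i * s j : ℝ) : ℂ)).re = X.re * (r i * s j) := by
      simp [Complex.mul_re]
    have him' : (X * ((r i * s j : ℝ) : ℂ)).im = X.im * (r i * s j) := by
      simp [Complex.mul_im]
    rw [hre'] at hre
    rw [him'] at him
    have hXim : X.im = 0 := by
      rcases mul_eq_zero.mp him.symm with h | h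
      · exact h
      · exact absurd h hc.ne'
    have hXre : 0 ≤ X.re := by
      by_contra hcon
      push_neg at hcon
      nlinarith
    have hteq : t i j = X.re := by simp only [ht, hX]
    constructor
    · rw [hteq]
      apply Complex.ext
      · simp
      · simpa using hXim
    · rw [hteq]; exact hXre
  have hTeq : ∀ i ∈ A, ∀ j ∈ F,
      u i j * e i * (starRingEnd ℂ) (g j) = ((t i j : ℝ) : ℂ) :=
    fun i hi j hj => (hTboth i hi j hj).1
  have ht0 : ∀ i ∈ A, ∀ j ∈ F, 0 ≤ t i j := fun i hi j hj => (hTboth i hi j hj).2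
  have ht1 : ∀ i ∈ A, ∀ j ∈ F, t i j < 1 := by
    intro i hi j hj
    have h1 : t i j ≤ ‖u i j * e i * (starRingEnd ℂ) (g j)‖ := by
      simp only [ht]
      exact Complex.re_le_norm _
    have h2 : ‖u i j * e i * (starRingEnd ℂ) (g j)‖ = ‖u i j‖ := by
      rw [norm_mul, norm_mul, Complex.norm_conj]
      have hei : ‖e i‖ = 1 := by
        simp only [he]; exact phase_abs ((hAmem i).mp hi)
      have hgj : ‖g j‖ = 1 := by
        simp only [hg]; exact phase_abs ((hFmem j).mp hj)
      rw [hei, hgj, mul_one, mul_one]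
    have h3 : ‖u i j‖ < 1 := by
      have := hpar i j
      rw [norm_inner_symm] at this
      simpa only [hu] using this
    calc t i j ≤ _ := h1
      _ = _ := h2
      _ < 1 := h3
  have hs_rel : ∀ j ∈ F, s j = ∑ i ∈ A, t i j * r i := by
    intro j hj
    have hfj := (hFmem j).mp hj
    have hC : ((s j : ℝ) : ℂ) = ∑ i ∈ A, ((t i j * r i : ℝ) : ℂ) := by
      calc ((s j : ℝ) : ℂ) = (starRingEnd ℂ) (g j) * cF j := by
            simp only [hg, hsdef]; exact (phase_conj_mul hfj).symm
        _ = ∑ i, (starRingEnd ℂ) (g j) * (u i j * cA i) := by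
            rw [hexpF j, Finset.mul_sum]
        _ = ∑ i ∈ A, (starRingEnd ℂ) (g j) * (u i j * cA i) := by
            symm
            apply Finset.sum_subset (Finset.subset_univ A)
            intro x _ hx
            have hx0 : cA x = 0 := by
              by_contra hc; exact hx ((hAmem x).mpr hc)
            rw [hx0, mul_zero, mul_zero]
        _ = ∑ i ∈ A, ((t i j * r i : ℝ) : ℂ) := by
            refine Finset.sum_congr rfl fun i hi => ?_
            rw [hcAe i hi]
            calc (starRingEnd ℂ) (g j) * (u i j * (e i * (r i : ℝ)))
                = (u i j * e i * (starRingEnd ℂ) (g j)) * (r i : ℝ) := by ring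
              _ = ((t i j : ℝ) : ℂ) * (r i : ℝ) := by rw [hTeq i hi j hj]
              _ = ((t i j * r i : ℝ) : ℂ) := by push_cast; ring
    rw [← Complex.ofReal_sum] at hC
    exact_mod_cast hC
  have hr_rel : ∀ i ∈ A, r i = ∑ j ∈ F, t i j * s j := by
    intro i hi
    have hai := (hAmem i).mp hi
    have hC : ((r i : ℝ) : ℂ) = ∑ j ∈ F, ((t i j * s j : ℝ) : ℂ) := by
      calc ((r i : ℝ) : ℂ) = (starRingEnd ℂ) (e i) * cA i := by
            simp only [he, hrdef]; exact (phase_conj_mul hai).symm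
        _ = ∑ j, (starRingEnd ℂ) (e i) * ((starRingEnd ℂ) (u i j) * cF j) := by
            rw [hexpA i, Finset.mul_sum]
        _ = ∑ j ∈ F, (starRingEnd ℂ) (e i) * ((starRingEnd ℂ) (u i j) * cF j) := by
            symm
            apply Finset.sum_subset (Finset.subset_univ F)
            intro x _ hx
            have hx0 : cF x = 0 := by
              by_contra hc; exact hx ((hFmem x).mpr hc)
            rw [hx0, mul_zero, mul_zero]
        _ = ∑ j ∈ F, ((t i j * s j : ℝ) : ℂ) := by
            refine Finset.sum_congr rfl fun j hj => ?_
            rw [hcFg j hj]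
            have hconjT : (starRingEnd ℂ) (u i j * e i * (starRingEnd ℂ) (g j))
                = (starRingEnd ℂ) (u i j) * (starRingEnd ℂ) (e i) * g j := by
              rw [map_mul, map_mul, Complex.conj_conj]
            calc (starRingEnd ℂ) (e i) * ((starRingEnd ℂ) (u i j) * (g j * (s j : ℝ)))
                = ((starRingEnd ℂ) (u i j) * (starRingEnd ℂ) (e i) * g j) * (s j : ℝ) := by ring
              _ = (starRingEnd ℂ) (u i j * e i * (starRingEnd ℂ) (g j)) * (s j : ℝ) := by
                  rw [hconjT]
              _ = ((t i j : ℝ) : ℂ) * (s j : ℝ) := by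
                  rw [hTeq i hi j hj, Complex.conj_ofReal]
              _ = ((t i j * s j : ℝ) : ℂ) := by push_cast; ring
    rw [← Complex.ofReal_sum] at hC
    exact_mod_cast hC
  -- representatives
  set R := F.filter (fun j => ∀ j' ∈ F, KDaux.Reach t A F (.inr j) (.inr j') → j ≤ j')
    with hRdef
  have hRmem : ∀ j, j ∈ R ↔ j ∈ F ∧ ∀ j' ∈ F,
      KDaux.Reach t A F (.inr j) (.inr j') → j ≤ j' := by
    intro j; rw [hRdef]; simp [Finset.mem_filter]
  have hcount := count_reps t A F r s hrpos hspos ht0 ht1 hr_rel hs_rel R hRmem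
  have hRF : R ⊆ F := fun j hj => ((hRmem j).mp hj).1
  -- linear independence
  have hdim : A.card + (F \ R).card ≤ d := by
    have hli : LinearIndependent ℂ
        (Sum.elim (fun i : {x // x ∈ A} => a i.1) (fun j : {x // x ∈ F \ R} => f j.1)) := by
      rw [Fintype.linearIndependent_iff]
      intro gc hgc
      set α : Fin d → ℂ := fun i => if h : i ∈ A then gc (Sum.inl ⟨i, h⟩) else 0 with hαdef
      set β : Fin d → ℂ := fun j => if h : j ∈ F \ R then gc (Sum.inr ⟨j, h⟩) else 0 with hβdef
      have hβR : ∀ j, j ∉ F \ R → β j = 0 := fun j hj => by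
        simp only [hβdef]; exact dif_neg hj
      have hsum0 : (∑ i, α i • a i) + (∑ j, β j • f j) = 0 := by
        rw [← hgc, Fintype.sum_sum_type]
        simp only [Sum.elim_inl, Sum.elim_inr]
        congr 1
        · rw [← Finset.sum_subset (Finset.subset_univ A) (fun x _ hx => by
            simp only [hαdef, dif_neg hx, zero_smul])]
          rw [← Finset.sum_attach A (fun i => α i • a i), Finset.univ_eq_attach]
          refine Finset.sum_congr rfl fun x _ => ?_
          simp only [hαdef, dif_pos x.2]
        · rw [← Finset.sum_subset (Finset.subset_univ (F \ R)) (fun x _ hx => by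
            simp only [hβdef, dif_neg hx, zero_smul])]
          rw [← Finset.sum_attach (F \ R) (fun j => β j • f j), Finset.univ_eq_attach]
          refine Finset.sum_congr rfl fun x _ => ?_
          simp only [hβdef, dif_pos x.2]
      have horthA := orthonormal_iff_ite.mp a.orthonormal
      have horthF := orthonormal_iff_ite.mp f.orthonormal
      have hE1 : ∀ k, α k + ∑ j, β j * (starRingEnd ℂ) (u k j) = 0 := by
        intro k
        have h0 : ⟪a k, (∑ i, α i • a i) + (∑ j, β j • f j)⟫ = (0 : ℂ) := by
          rw [hsum0, inner_zero_right]
        rw [inner_add_right, inner_sum, inner_sum] at h0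
        have h1 : ∑ i, ⟪a k, α i • a i⟫ = α k := by
          have : ∀ i ∈ Finset.univ, ⟪a k, α i • a i⟫
              = if k = i then α i else 0 := by
            intro i _
            rw [inner_smul_right, horthA k i]
            split <;> simp
          rw [Finset.sum_congr rfl this, Finset.sum_ite_eq]
          simp
        have h2 : ∑ j, ⟪a k, β j • f j⟫ = ∑ j, β j * (starRingEnd ℂ) (u k j) := by
          refine Finset.sum_congr rfl fun j _ => ?_
          rw [inner_smul_right]
          congr 1
          simp only [hu]
          exact (inner_conj_symm (a k) (f j)).symm
        rw [h1, h2] at h0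
        exact h0
      have hE2 : ∀ l, (∑ i, α i * u i l) + β l = 0 := by
        intro l
        have h0 : ⟪f l, (∑ i, α i • a i) + (∑ j, β j • f j)⟫ = (0 : ℂ) := by
          rw [hsum0, inner_zero_right]
        rw [inner_add_right, inner_sum, inner_sum] at h0
        have h1 : ∑ j, ⟪f l, β j • f j⟫ = β l := by
          have : ∀ j ∈ Finset.univ, ⟪f l, β j • f j⟫
              = if l = j then β j else 0 := by
            intro j _
            rw [inner_smul_right, horthF l j]
            split <;> simp
          rw [Finset.sum_congr rfl this, Finset.sum_ite_eq]
          simp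
        have h2 : ∑ i, ⟪f l, α i • a i⟫ = ∑ i, α i * u i l := by
          refine Finset.sum_congr rfl fun i _ => ?_
          rw [inner_smul_right]
        rw [h1, h2] at h0
        exact h0
      set αt : Fin d → ℂ := fun i => (starRingEnd ℂ) (e i) * (-(α i)) with hαt
      set βt : Fin d → ℂ := fun j => (starRingEnd ℂ) (g j) * β j with hβt
      have hgβ : ∀ j ∈ F, g j * βt j = β j := by
        intro j hj
        have hfj := (hFmem j).mp hj
        simp only [hβt]
        rw [← mul_assoc]
        have : g j * (starRingEnd ℂ) (g j) = 1 := by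
          simp only [hg]; exact phase_unit hfj
        rw [this, one_mul]
      have heα : ∀ i ∈ A, e i * αt i = -(α i) := by
        intro i hi
        have hai := (hAmem i).mp hi
        simp only [hαt]
        rw [← mul_assoc]
        have : e i * (starRingEnd ℂ) (e i) = 1 := by
          simp only [he]; exact phase_unit hai
        rw [this, one_mul]
      have hαrel : ∀ i ∈ A, αt i = ∑ j ∈ F, ((t i j : ℝ) : ℂ) * βt j := by
        intro i hi
        have hneg : -(α i) = ∑ j, (starRingEnd ℂ) (u i j) * β j := by
          have h := hE1 i
          have : α i = -∑ j, β j * (starRingEnd ℂ) (u i j) := by linear_combination h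
          rw [this, neg_neg]
          exact Finset.sum_congr rfl fun j _ => by ring
        simp only [hαt]
        rw [hneg, Finset.mul_sum]
        rw [← Finset.sum_subset (Finset.subset_univ F) (fun x _ hx => by
          rw [hβR x (fun hc => hx (Finset.mem_sdiff.mp hc).1), mul_zero, mul_zero])]
        refine Finset.sum_congr rfl fun j hj => ?_
        rw [← hgβ j hj]
        have hconjT : (starRingEnd ℂ) (u i j * e i * (starRingEnd ℂ) (g j))
            = (starRingEnd ℂ) (u i j) * (starRingEnd ℂ) (e i) * g j := by
          rw [map_mul, map_mul, Complex.conj_conj]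
        calc (starRingEnd ℂ) (e i) * ((starRingEnd ℂ) (u i j) * (g j * βt j))
            = ((starRingEnd ℂ) (u i j) * (starRingEnd ℂ) (e i) * g j) * βt j := by ring
          _ = (starRingEnd ℂ) (u i j * e i * (starRingEnd ℂ) (g j)) * βt j := by rw [hconjT]
          _ = ((t i j : ℝ) : ℂ) * βt j := by rw [hTeq i hi j hj, Complex.conj_ofReal]
      have hβrel : ∀ j ∈ F, βt j = ∑ i ∈ A, ((t i j : ℝ) : ℂ) * αt i := by
        intro j hj
        have hneg : β j = ∑ i, u i j * (-(α i)) := by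
          have h := hE2 j
          have : β j = -∑ i, α i * u i j := by linear_combination h
          rw [this, ← Finset.sum_neg_distrib]
          exact Finset.sum_congr rfl fun i _ => by ring
        simp only [hβt]
        rw [hneg, Finset.mul_sum]
        rw [← Finset.sum_subset (Finset.subset_univ A) (fun x _ hx => by
          have hx0 : α x = 0 := by simp only [hαdef]; exact dif_neg hx
          rw [hx0, neg_zero, mul_zero, mul_zero])]
        refine Finset.sum_congr rfl fun i hi => ?_
        rw [← heα i hi]
        calc (starRingEnd ℂ) (g j) * (u i j * (e i * αt i))
            = (u i j * e i * (starRingEnd ℂ) (g j)) * αt i := by ring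
          _ = ((t i j : ℝ) : ℂ) * αt i := by rw [hTeq i hi j hj]
      have hβ0 : ∀ j ∈ F, (∀ j' ∈ F, KDaux.Reach t A F (.inr j) (.inr j') → j ≤ j') →
          βt j = 0 := by
        intro j hj hmin
        have hjR : j ∈ R := (hRmem j).mpr ⟨hj, hmin⟩
        have : β j = 0 := hβR j (fun hc => (Finset.mem_sdiff.mp hc).2 hjR)
        simp only [hβt, this, mul_zero]
      have hβall := perron_vanish t A F r s hrpos hspos ht0 hr_rel hs_rel αt βt hαrel hβrel hβ0
      have hβzero : ∀ j, β j = 0 := by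
        intro j
        by_cases hj : j ∈ F \ R
        · have hjF : j ∈ F := (Finset.mem_sdiff.mp hj).1
          rw [← hgβ j hjF, hβall j hjF, mul_zero]
        · exact hβR j hj
      have hαzero : ∀ k, α k = 0 := by
        intro k
        have h := hE1 k
        have : ∑ j, β j * (starRingEnd ℂ) (u k j) = 0 :=
          Finset.sum_eq_zero fun j _ => by rw [hβzero j, zero_mul]
        rw [this, add_zero] at h
        exact h
      intro x
      cases x with
      | inl i =>
        have h := hαzero i.1
        simp only [hαdef, dif_pos i.2] at h
        simpa using h
      | inr j =>
        have h := hβzero j.1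
        simp only [hβdef, dif_pos j.2] at h
        simpa using h
    have hcard := hli.fintype_card_le_finrank
    rw [finrank_euclideanSpace_fin] at hcard
    have hcards : Fintype.card ({x // x ∈ A} ⊕ {x // x ∈ F \ R})
        = A.card + (F \ R).card := by
      rw [Fintype.card_sum, Fintype.card_coe, Fintype.card_coe]
    rw [hcards] at hcard
    exact hcard
  have hFR : (F \ R).card = F.card - R.card := Finset.card_sdiff_of_subset hRF
  have hRle : R.card ≤ F.card := Finset.card_le_card hRF
  rw [hFR] at hdim
  omega
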